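/- Let Z, {x}, W be pairwise disjoint node sets in an ADMG G with node set V. Let O₁ be the set of nodes v ∈ V such that some directed path from x to v contains a node of W, and let O₃ be the set of nodes v ∈ V such that some walk from Z to v is open given W and does not end with a segment of the form x → … → v (a final subwalk starting at x and consisting solely of directed edges pointing toward v). If no walk from Z to x is open given W, then there is no node y such that (Z,W) is a valid conditional instrumental set relative to (x,y) in G; otherwise, the set of nodes y such that (Z,W) is a valid conditional instrumental set relative to (x,y) in G equals V ∖ (O₁ ∪ O₃ ∪ Z ∪ W ∪ {x}). -/

import Mathlib

/-- Edge type of a step on a walk in a mixed graph, relative to the direction of travel: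
`fwd` is a directed edge pointing forward, `back` a directed edge pointing backward,
`bi` a bidirected edge. -/
inductive EdgeDir : Type
  | fwd
  | back
  | bi
  deriving DecidableEq

/-- The edge has an arrowhead at its second endpoint. -/
def EdgeDir.arrowSnd : EdgeDir → Prop
  | .fwd => True
  | .back => False
  | .bi => True

/-- The edge has an arrowhead at its first endpoint. -/
def EdgeDir.arrowFst : EdgeDir → Prop
  | .fwd => False
  | .back => True
  | .bi => True

/-- The common node between consecutive walk edges `e₁, e₂` is a collider:
both edges have an arrowhead at it. -/
def IsColliderPair (e₁ e₂ : EdgeDir) : Prop := e₁.arrowSnd ∧ e₂.arrowFst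

/-- A mixed graph: a set of directed edges and a set of bidirected edges on node type `V`. -/
structure MixedGraph (V : Type) where
  dir : V → V → Prop
  bidir : V → V → Prop

namespace MixedGraph

variable {V : Type}

/-- `G` is an acyclic directed mixed graph: the bidirected edges are symmetric and
the directed edges contain no directed cycle. -/
def IsADMG (G : MixedGraph V) : Prop :=
  (∀ a b, G.bidir a b → G.bidir b a) ∧ ∀ v, ¬ Relation.TransGen G.dir v v

/-- There is an edge of type `e` between `a` and `b` (in this travel direction). -/
def IsEdge (G : MixedGraph V) : EdgeDir → V → V → Prop
  | .fwd, a, b => G.dir a b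
  | .back, a, b => G.dir b a
  | .bi, a, b => G.bidir a b

/-- Walks in a mixed graph. -/
inductive Walk (G : MixedGraph V) : V → V → Type
  | nil (v : V) : Walk G v v
  | cons {a b c : V} (e : EdgeDir) (hab : G.IsEdge e a b) (w : Walk G b c) : Walk G a c

namespace Walk

variable {G : MixedGraph V}

/-- The list of nodes of a walk, in order (with multiplicity). -/
def support : {a b : V} → G.Walk a b → List V
  | a, _, .nil _ => [a]
  | a, _, .cons _ _ w => a :: w.support

/-- The list of edge types along a walk. -/
def edges : {a b : V} → G.Walk a b → List EdgeDir
  | _, _, .nil _ => []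
  | _, _, .cons e _ w => e :: w.edges

/-- All edges of the walk are directed and point toward the end of the walk. -/
def AllFwd : {a b : V} → G.Walk a b → Prop
  | _, _, .nil _ => True
  | _, _, .cons e _ w => e = EdgeDir.fwd ∧ w.AllFwd

/-- Auxiliary predicate: the current node `b` was reached via an edge of type `e₁` and
the walk continues with `w`; every interior node from `b` onward that is a collider is in `W`
and every interior node from `b` onward that is a non-collider is not in `W`. -/
def openFrom (W : Set V) : EdgeDir → (b : V) → {c : V} → G.Walk b c → Prop
  | _, _, _, .nil _ => True
  | e₁, b, _, @Walk.cons _ _ _ m _ e₂ _ w =>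
      (IsColliderPair e₁ e₂ → b ∈ W) ∧ (¬ IsColliderPair e₁ e₂ → b ∉ W) ∧
      openFrom W e₂ m w

/-- A walk is open given `W` if every collider on it lies in `W` and no non-collider
on it lies in `W`. -/
def IsOpen {a b : V} (W : Set V) (w : G.Walk a b) : Prop :=
  match w with
  | .nil _ => True
  | @Walk.cons _ _ _ m _ e _ w' => openFrom W e m w'

/-- The walk ends with a segment of the form `x → ⋯ → end`: it has a final subwalk that
starts at `x` and consists solely of directed edges pointing toward the end of the walk. -/
def EndsWithDirFrom (x : V) : {a b : V} → G.Walk a b → Prop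
  | a, _, .nil _ => a = x
  | a, _, .cons e _ w => (a = x ∧ e = EdgeDir.fwd ∧ w.AllFwd) ∨ w.EndsWithDirFrom x

/-- The first edge of the walk has an arrowhead at the start node. -/
def firstArrowIn : {a b : V} → G.Walk a b → Prop
  | _, _, .nil _ => False
  | _, _, .cons e _ _ => e.arrowFst

/-- The last edge of the walk has an arrowhead at the end node. -/
def lastArrowIn : {a b : V} → G.Walk a b → Prop
  | _, _, .nil _ => False
  | _, _, .cons e _ (.nil _) => e.arrowSnd
  | _, _, .cons _ _ (.cons e h w) => lastArrowIn (.cons e h w)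

/-- For each interior node of the walk, the pair of edges incident to it on the walk,
together with the node itself. -/
def colliderTriples {a b : V} (w : G.Walk a b) : List (EdgeDir × EdgeDir × V) :=
  w.edges.zip (w.edges.tail.zip w.support.tail)

end Walk

/-- `X` and `Z` are d-connected given `C`: some walk from a node of `X` to a node of `Z`
is open given `C`. -/
def dConn (G : MixedGraph V) (X Z C : Set V) : Prop :=
  ∃ x ∈ X, ∃ z ∈ Z, ∃ w : G.Walk x z, w.IsOpen C

/-- The descendants of `x` (including `x` itself). -/
def desc (G : MixedGraph V) (x : V) : Set V := {v | Relation.ReflTransGen G.dir x v}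

/-- The descendants of a set of nodes. -/
def descSet (G : MixedGraph V) (S : Set V) : Set V :=
  {v | ∃ s ∈ S, Relation.ReflTransGen G.dir s v}

/-- The ancestors of a set of nodes (including the set itself). -/
def anc (G : MixedGraph V) (S : Set V) : Set V :=
  {v | ∃ s ∈ S, Relation.ReflTransGen G.dir v s}

/-- The parents of a set of nodes. -/
def pa (G : MixedGraph V) (S : Set V) : Set V := {p | ∃ s ∈ S, G.dir p s}

/-- `causal_G(x,y)`: the nodes `v ≠ x` lying on a proper directed path from `x` to `y`. -/
def causal (G : MixedGraph V) (x y : V) : Set V :=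
  {v | v ≠ x ∧ ∃ w : G.Walk x y, w.AllFwd ∧ w.support.Nodup ∧ v ∈ w.support}

/-- The forbidden nodes `forb_G(x,y) = de_G(causal_G(x,y)) ∪ {x}`. -/
def forb (G : MixedGraph V) (x y : V) : Set V := G.descSet (G.causal x y) ∪ {x}

/-- `G̃`: the graph `G` with every directed edge from `x` to a node of `causal_G(x,y)` removed. -/
def tilde (G : MixedGraph V) (x y : V) : MixedGraph V where
  dir a b := G.dir a b ∧ ¬(a = x ∧ b ∈ G.causal x y)
  bidir := G.bidir

/-- `(Z, W)` is a valid conditional instrumental set relative to `(x, y)` in `G`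
(the graphical criterion of Henckel et al., taken as the definition): the sets
`{x,y}`, `Z`, `W` are pairwise disjoint, `(Z ∪ W) ∩ forb_G(x,y) = ∅`, `x ⊄⊥_G Z | W`,
and `y ⊥_G̃ Z | W`. -/
def ValidCIS (G : MixedGraph V) (x y : V) (Z W : Set V) : Prop :=
  x ≠ y ∧ x ∉ Z ∧ x ∉ W ∧ y ∉ Z ∧ y ∉ W ∧ Disjoint Z W ∧
  (Z ∪ W) ∩ G.forb x y = ∅ ∧
  G.dConn {x} Z W ∧
  ¬ (G.tilde x y).dConn {y} Z W

/-- `W` is a nearest separator with respect to `(y, z, R)` in `H` (with ambient node `x`). -/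
def NearestSep (H : MixedGraph V) (x y z : V) (R : Set V) (W : Set V) : Prop :=
  W ⊆ R ∩ H.anc {y, z} ∧
  ¬ H.dConn {y} {z} W ∧
  ∀ w ∈ W, ∀ W' ⊆ (R ∩ H.anc {y, z}) \ {x, y, w},
    H.dConn {w} {z} W' → H.dConn {y} {z} W'

/-- `dis_{G,W}(u)`: the nodes connected to `u` via a path of bidirected edges with no
node in `W` (with `u ∈ dis_{G,W}(u)`). -/
def dis (G : MixedGraph V) (W : Set V) (u : V) : Set V :=
  {v | Relation.ReflTransGen (fun a b => G.bidir a b ∧ a ∉ W ∧ b ∉ W) u v}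

/-- `dis⁺_{G,W}(u) = (dis_{G,W}(u) ∪ pa_G(dis_{G,W}(u))) ∖ W`. -/
def disPlus (G : MixedGraph V) (W : Set V) (u : V) : Set V :=
  (G.dis W u ∪ G.pa (G.dis W u)) \ W

/-- `W^opt` of Henckel et al. -/
def Wopt (G : MixedGraph V) (x y : V) : Set V := G.disPlus {x} y \ {x, y}

/-- `Z^opt` of Henckel et al. -/
def Zopt (G : MixedGraph V) (x y : V) : Set V :=
  G.disPlus {y} x \ (G.Wopt x y ∪ {x, y})

/-- The latent projection of `G` over the latent nodes `L`: a directed edge exactly when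
`G` has a directed path whose non-endpoint nodes lie in `L`, and a bidirected edge exactly
when `G` has a path whose non-endpoint nodes are non-colliders lying in `L` and whose first
and last edges have an arrowhead at the respective endpoint. -/
def latentProj (G : MixedGraph V) (L : Set V) : MixedGraph V where
  dir a b := a ∉ L ∧ b ∉ L ∧ ∃ w : G.Walk a b,
    w.edges ≠ [] ∧ w.AllFwd ∧ w.support.Nodup ∧ ∀ v ∈ w.support.tail.dropLast, v ∈ L
  bidir a b := a ∉ L ∧ b ∉ L ∧ ∃ w : G.Walk a b,
    w.support.Nodup ∧ w.firstArrowIn ∧ w.lastArrowIn ∧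
    (∀ v ∈ w.support.tail.dropLast, v ∈ L) ∧
    ∀ t ∈ w.colliderTriples, ¬ IsColliderPair t.1 t.2.1

end MixedGraph

/-- The moralization of a DAG with edge relation `E` contains the (undirected) edge
`a − b` (for `a ≠ b`) exactly when `E a b`, or `E b a`, or `a` and `b` have a common child. -/
def MoralEdge {α : Type} (E : α → α → Prop) (a b : α) : Prop :=
  a ≠ b ∧ (E a b ∨ E b a ∨ ∃ c, E a c ∧ E b c)

section Aux

/-! ### Auxiliary machinery -/

namespace EdgeDir

def flip : EdgeDir → EdgeDir
  | .fwd => .back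
  | .back => .fwd
  | .bi => .bi

end EdgeDir

lemma collider_flip (e₁ e₂ : EdgeDir) :
    IsColliderPair e₂.flip e₁.flip ↔ IsColliderPair e₁ e₂ := by
  cases e₁ <;> cases e₂ <;>
    simp [IsColliderPair, EdgeDir.flip, EdgeDir.arrowSnd, EdgeDir.arrowFst]

lemma not_collider_snd_fwd (e : EdgeDir) : ¬ IsColliderPair e .fwd := by
  cases e <;> simp [IsColliderPair, EdgeDir.arrowSnd, EdgeDir.arrowFst]

lemma not_collider_fst_back (e : EdgeDir) : ¬ IsColliderPair .back e := by
  cases e <;> simp [IsColliderPair, EdgeDir.arrowSnd, EdgeDir.arrowFst]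

lemma collider_back_of (e₁ e₂ : EdgeDir) (h : ¬ IsColliderPair e₁ e₂) (h₁ : e₁.arrowSnd) :
    e₂ = .fwd := by
  cases e₂ <;> simp_all [IsColliderPair, EdgeDir.arrowSnd, EdgeDir.arrowFst]

lemma back_of_not_arrowSnd (e : EdgeDir) (h : ¬ e.arrowSnd) : e = .back := by
  cases e <;> simp_all [EdgeDir.arrowSnd]

namespace MixedGraph

variable {V : Type} {G : MixedGraph V}

lemma IsEdge.flip (hs : ∀ a b, G.bidir a b → G.bidir b a) {e : EdgeDir} {a b : V}
    (h : G.IsEdge e a b) : G.IsEdge e.flip b a := by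
  cases e
  · exact h
  · exact h
  · exact hs _ _ h

namespace Walk

def append : {a b c : V} → G.Walk a b → G.Walk b c → G.Walk a c
  | _, _, _, .nil _, w₂ => w₂
  | _, _, _, .cons e h w, w₂ => .cons e h (w.append w₂)

def reverse (hs : ∀ a b, G.bidir a b → G.bidir b a) : {a b : V} → G.Walk a b → G.Walk b a
  | _, _, .nil v => .nil v
  | _, _, .cons e h w => (reverse hs w).append (.cons e.flip (h.flip hs) (.nil _))

def lastE : EdgeDir → {a b : V} → G.Walk a b → EdgeDir
  | e, _, _, .nil _ => e
  | _, _, _, .cons e' _ w => lastE e' w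

def AllBack : {a b : V} → G.Walk a b → Prop
  | _, _, .nil _ => True
  | _, _, .cons e _ w => e = EdgeDir.back ∧ w.AllBack

lemma support_eq_cons : ∀ {a b : V} (w : G.Walk a b), w.support = a :: w.support.tail
  | _, _, .nil _ => rfl
  | _, _, .cons _ _ _ => rfl

lemma start_mem_support {a b : V} (w : G.Walk a b) : a ∈ w.support := by
  rw [support_eq_cons]; exact List.mem_cons_self

lemma end_mem_support : ∀ {a b : V} (w : G.Walk a b), b ∈ w.support
  | _, _, .nil _ => List.mem_singleton.2 rfl
  | _, _, .cons _ _ w => List.mem_cons_of_mem _ (end_mem_support w)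

lemma support_append : ∀ {a b c : V} (w₁ : G.Walk a b) (w₂ : G.Walk b c),
    (w₁.append w₂).support = w₁.support ++ w₂.support.tail
  | _, _, _, .nil _, w₂ => by
    show w₂.support = _ ++ _
    rw [support_eq_cons w₂]; rfl
  | _, _, _, .cons e h w, w₂ => by
    show _ :: (w.append w₂).support = _
    rw [support_append w w₂]; rfl

lemma append_nil : ∀ {a b : V} (w : G.Walk a b), w.append (.nil b) = w
  | _, _, .nil _ => rfl
  | _, _, .cons e h w => by rw [show (Walk.cons e h w).append (.nil _) = .cons e h (w.append (.nil _)) from rfl, append_nil w]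

lemma append_assoc : ∀ {a b c d : V} (w₁ : G.Walk a b) (w₂ : G.Walk b c) (w₃ : G.Walk c d),
    (w₁.append w₂).append w₃ = w₁.append (w₂.append w₃)
  | _, _, _, _, .nil _, _, _ => rfl
  | _, _, _, _, .cons e h w, w₂, w₃ => by
    show Walk.cons e h ((w.append w₂).append w₃) = Walk.cons e h (w.append (w₂.append w₃))
    rw [append_assoc w w₂ w₃]

lemma support_reverse (hs : ∀ a b, G.bidir a b → G.bidir b a) :
    ∀ {a b : V} (w : G.Walk a b), (w.reverse hs).support = w.support.reverse
  | _, _, .nil _ => rfl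
  | _, _, .cons e h w => by
    show ((w.reverse hs).append _).support = _
    rw [support_append, support_reverse hs w]
    show _ ++ [_] = _
    simp [support]

lemma allFwd_append : ∀ {a b c : V} (w₁ : G.Walk a b) (w₂ : G.Walk b c),
    (w₁.append w₂).AllFwd ↔ w₁.AllFwd ∧ w₂.AllFwd
  | _, _, _, .nil _, w₂ => by simp [append, AllFwd]
  | _, _, _, .cons e h w, w₂ => by
    show (e = EdgeDir.fwd ∧ (w.append w₂).AllFwd) ↔ _
    rw [allFwd_append w w₂]
    simp [AllFwd, and_assoc]

lemma allBack_append : ∀ {a b c : V} (w₁ : G.Walk a b) (w₂ : G.Walk b c),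
    (w₁.append w₂).AllBack ↔ w₁.AllBack ∧ w₂.AllBack
  | _, _, _, .nil _, w₂ => by simp [append, AllBack]
  | _, _, _, .cons e h w, w₂ => by
    show (e = EdgeDir.back ∧ (w.append w₂).AllBack) ↔ _
    rw [allBack_append w w₂]
    simp [AllBack, and_assoc]

lemma allBack_reverse (hs : ∀ a b, G.bidir a b → G.bidir b a) :
    ∀ {a b : V} (w : G.Walk a b), w.AllFwd → (w.reverse hs).AllBack
  | _, _, .nil _, _ => trivial
  | _, _, .cons e h w, hf => by
    show ((w.reverse hs).append _).AllBack
    rw [allBack_append]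
    refine ⟨allBack_reverse hs w hf.2, ?_, trivial⟩
    rw [hf.1]; rfl

lemma openFrom_append {Wt : Set V} : ∀ {b m c : V} (e : EdgeDir) (w₁ : G.Walk b m) (w₂ : G.Walk m c),
    openFrom Wt e b (w₁.append w₂) ↔ openFrom Wt e b w₁ ∧ openFrom Wt (lastE e w₁) m w₂
  | _, _, _, e, .nil _, w₂ => by simp [append, openFrom, lastE]
  | _, _, _, e, .cons e₂ h w, w₂ => by
    show ((IsColliderPair e e₂ → _) ∧ (¬ IsColliderPair e e₂ → _) ∧ openFrom Wt e₂ _ (w.append w₂)) ↔ _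
    rw [openFrom_append e₂ w w₂]
    show _ ↔ ((_ → _) ∧ (_ → _) ∧ openFrom Wt e₂ _ w) ∧ openFrom Wt (lastE e₂ w) _ w₂
    tauto

lemma isOpen_of_openFrom {Wt : Set V} {e : EdgeDir} : ∀ {b c : V} (w : G.Walk b c),
    openFrom Wt e b w → w.IsOpen Wt
  | _, _, .nil _, _ => trivial
  | _, _, .cons e₂ h w, ho => ho.2.2

lemma openFrom_of_decomp {Wt : Set V} : ∀ {a m m' b : V} (w₀ : G.Walk a m) (e : EdgeDir)
    (h : G.IsEdge e m m') (w : G.Walk m' b),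
    ((w₀.append (.cons e h w)).IsOpen Wt) → openFrom Wt e m' w
  | _, _, _, _, .nil _, e, h, w, ho => ho
  | _, _, _, _, .cons e₀ h₀ w₀, e, h, w, ho => by
    have : openFrom Wt e₀ _ (w₀.append (.cons e h w)) := ho
    rw [openFrom_append] at this
    exact this.2.2.2

end Walk

end MixedGraph

end Aux
section Aux2

lemma List.tail_dropLast_subset' {α : Type*} (l : List α) : l.tail.dropLast ⊆ l.dropLast := by
  match l with
  | [] => simp
  | [a] => simp
  | a :: b :: l =>
    intro v hv
    rw [show (a :: b :: l).tail = b :: l from rfl] at hv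
    rw [List.dropLast_cons_of_ne_nil (l := b :: l) (by simp)]
    exact List.mem_cons_of_mem _ hv

namespace MixedGraph

variable {V : Type} {G : MixedGraph V}

namespace Walk

lemma reverse_open_aux {Wt : Set V} (hs : ∀ a b, G.bidir a b → G.bidir b a) :
    ∀ {m b : V} (w : G.Walk m b) {a₀ c : V} (e₀ : EdgeDir)
      (h₀ : G.IsEdge e₀.flip m a₀) (t : G.Walk a₀ c),
      openFrom Wt e₀ m w → openFrom Wt e₀.flip a₀ t →
      ((w.reverse hs).append (.cons e₀.flip h₀ t)).IsOpen Wt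
  | _, _, .nil _, _, _, e₀, h₀, t, _, ht => by
    show openFrom Wt e₀.flip _ t
    exact ht
  | _, _, .cons e₂ h₂ w₂, _, _, e₀, h₀, t, hw, ht => by
    obtain ⟨hc₁, hc₂, hw₂⟩ := hw
    show ((((w₂.reverse hs).append _)).append _).IsOpen Wt
    rw [append_assoc]
    refine reverse_open_aux hs w₂ e₂ (h₂.flip hs) (.cons e₀.flip h₀ t) hw₂ ?_
    refine ⟨?_, ?_, ht⟩
    · intro hcol; exact hc₁ ((collider_flip _ _).1 hcol)
    · intro hcol; exact hc₂ (fun hh => hcol ((collider_flip _ _).2 hh))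

lemma isOpen_reverse {Wt : Set V} (hs : ∀ a b, G.bidir a b → G.bidir b a) :
    ∀ {a b : V} (w : G.Walk a b), w.IsOpen Wt → (w.reverse hs).IsOpen Wt
  | _, _, .nil _, _ => trivial
  | _, _, .cons e h w, ho =>
    reverse_open_aux hs w e (h.flip hs) (.nil _) ho trivial

/-- L1: a forward walk whose nodes other than the final one avoid `W` is open from
anywhere. -/
lemma openFrom_of_allFwd {Wt : Set V} :
    ∀ {b c : V} (w : G.Walk b c) (e : EdgeDir), w.AllFwd →
      (∀ v ∈ w.support.dropLast, v ∉ Wt) → openFrom Wt e b w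
  | _, _, .nil _, _, _, _ => trivial
  | b, _, .cons e₂ h₂ w₂, e, hf, hW => by
    obtain ⟨rfl, hf₂⟩ := hf
    have hb : b ∉ Wt := by
      apply hW
      rw [show (Walk.cons EdgeDir.fwd h₂ w₂).support = b :: w₂.support from rfl]
      rw [List.dropLast_cons_of_ne_nil]
      · exact List.mem_cons_self
      · rw [support_eq_cons w₂]; simp
    refine ⟨fun hcol => absurd hcol (not_collider_snd_fwd e), fun _ => hb, ?_⟩
    apply openFrom_of_allFwd w₂ _ hf₂
    intro v hv
    apply hW
    rw [show (Walk.cons EdgeDir.fwd h₂ w₂).support = b :: w₂.support from rfl]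
    rcases w₂ with _ | _
    · simp [support] at hv
    · rw [List.dropLast_cons_of_ne_nil]
      · exact List.mem_cons_of_mem _ hv
      · rw [support_eq_cons]; simp

/-- L2: an all-backward walk whose interior avoids `W` is open from `e`, provided the
collider/non-collider condition holds at the start node. -/
lemma openFrom_of_allBack {Wt : Set V} :
    ∀ {b c : V} (w : G.Walk b c) (e : EdgeDir), w.AllBack →
      (e.arrowSnd → b ∈ Wt) → (¬ e.arrowSnd → b ∉ Wt) →
      (∀ v ∈ w.support.tail.dropLast, v ∉ Wt) → openFrom Wt e b w
  | _, _, .nil _, _, _, _, _, _ => trivial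
  | b, _, .cons e₂ h₂ w₂, e, hbk, hb₁, hb₂, hW => by
    obtain ⟨rfl, hb₂'⟩ := hbk
    refine ⟨?_, ?_, ?_⟩
    · intro hcol
      exact hb₁ hcol.1
    · intro hcol
      apply hb₂
      intro hsnd
      exact hcol ⟨hsnd, trivial⟩
    · rcases w₂ with _ | ⟨e₃, h₃, w₃⟩
      · trivial
      · have htail : (Walk.cons EdgeDir.back h₂ (Walk.cons e₃ h₃ w₃)).support.tail
            = (Walk.cons e₃ h₃ w₃).support := rfl
        apply openFrom_of_allBack (Walk.cons e₃ h₃ w₃) _ hb₂'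
        · intro hsnd
          exact absurd hsnd (by simp [EdgeDir.arrowSnd])
        · intro _
          apply hW
          rw [htail, support_eq_cons (Walk.cons e₃ h₃ w₃), List.dropLast_cons_of_ne_nil]
          · exact List.mem_cons_self
          · rw [show (Walk.cons e₃ h₃ w₃).support.tail = w₃.support from rfl,
              support_eq_cons w₃]
            simp
        · intro v hv
          apply hW
          rw [htail]
          exact List.tail_dropLast_subset' _ hv

end Walk

end MixedGraph

end Aux2
section Aux3

namespace MixedGraph

variable {V : Type} {G : MixedGraph V}

namespace Walk

lemma lastE_fwd_of_allFwd : ∀ {a b : V} (w : G.Walk a b), w.AllFwd →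
    lastE EdgeDir.fwd w = EdgeDir.fwd
  | _, _, .nil _, _ => rfl
  | _, _, .cons e h w, hf => by
    show lastE e w = EdgeDir.fwd
    rw [hf.1]
    exact lastE_fwd_of_allFwd w hf.2

lemma lastE_back_of_allBack : ∀ {a b : V} (w : G.Walk a b), w.AllBack →
    lastE EdgeDir.back w = EdgeDir.back
  | _, _, .nil _, _ => rfl
  | _, _, .cons e h w, hf => by
    show lastE e w = EdgeDir.back
    rw [hf.1]
    exact lastE_back_of_allBack w hf.2

lemma ends_append {x : V} : ∀ {a b c : V} (w₁ : G.Walk a b) (w₂ : G.Walk b c),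
    (w₁.append w₂).EndsWithDirFrom x →
      (w₁.EndsWithDirFrom x ∧ w₂.AllFwd) ∨ w₂.EndsWithDirFrom x
  | _, _, _, .nil _, w₂, h => Or.inr h
  | _, _, _, .cons e he w, w₂, h => by
    rcases h with ⟨rfl, rfl, hf⟩ | h
    · rw [allFwd_append] at hf
      exact Or.inl ⟨Or.inl ⟨rfl, rfl, hf.1⟩, hf.2⟩
    · rcases ends_append w w₂ h with ⟨h₁, h₂⟩ | h₂
      · exact Or.inl ⟨Or.inr h₁, h₂⟩
      · exact Or.inr h₂

lemma ends_append_right {x : V} : ∀ {a b c : V} (w₁ : G.Walk a b) {w₂ : G.Walk b c},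
    w₂.EndsWithDirFrom x → (w₁.append w₂).EndsWithDirFrom x
  | _, _, _, .nil _, _, h => h
  | _, _, _, .cons e he w, w₂, h => Or.inr (ends_append_right w h)

lemma ends_of_allFwd_start : ∀ {x b : V} (w : G.Walk x b), w.AllFwd → w.EndsWithDirFrom x
  | _, _, .nil _, _ => rfl
  | _, _, .cons e he w, hf => Or.inl ⟨rfl, hf.1, hf.2⟩

lemma mem_of_ends_allFwd {x : V} : ∀ {a b : V} (w : G.Walk a b), w.AllFwd →
    w.EndsWithDirFrom x → x ∈ w.support
  | _, _, .nil _, _, h => by simp [support, h.symm]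
  | _, _, .cons e he w, hf, h => by
    rcases h with ⟨rfl, _, _⟩ | h
    · exact start_mem_support _
    · exact List.mem_cons_of_mem _ (mem_of_ends_allFwd w hf.2 h)

lemma end_eq_of_ends_allBack {x : V} : ∀ {a b : V} (w : G.Walk a b), w.AllBack →
    w.EndsWithDirFrom x → b = x
  | _, _, .nil _, _, h => h
  | _, _, .cons e he w, hb, h => by
    rcases h with ⟨_, rfl, _⟩ | h
    · exact absurd hb.1 (by simp)
    · exact end_eq_of_ends_allBack w hb.2 h

lemma ends_decomp {x : V} : ∀ {a b : V} (w : G.Walk a b), w.EndsWithDirFrom x →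
    ∃ (w₀ : G.Walk a x) (s : G.Walk x b), s.AllFwd ∧ w = w₀.append s
  | _, _, .nil v, h => by
    subst h
    exact ⟨.nil _, .nil _, trivial, rfl⟩
  | _, _, .cons e he w, h => by
    rcases h with ⟨rfl, rfl, hf⟩ | h
    · exact ⟨.nil _, .cons EdgeDir.fwd he w, ⟨rfl, hf⟩, rfl⟩
    · obtain ⟨w₀, s, hs, rfl⟩ := ends_decomp w h
      exact ⟨.cons e he w₀, s, hs, rfl⟩

lemma rtg_of_allFwd : ∀ {a b : V} (w : G.Walk a b), w.AllFwd →
    Relation.ReflTransGen G.dir a b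
  | _, _, .nil _, _ => Relation.ReflTransGen.refl
  | _, _, .cons e he w, hf => by
    have : G.IsEdge EdgeDir.fwd _ _ := hf.1 ▸ he
    exact Relation.ReflTransGen.head this (rtg_of_allFwd w hf.2)

lemma rtg_of_mem_allFwd {v : V} : ∀ {a b : V} (w : G.Walk a b), w.AllFwd →
    v ∈ w.support → Relation.ReflTransGen G.dir a v ∧ Relation.ReflTransGen G.dir v b
  | _, _, .nil _, _, hv => by
    rw [show v = _ from (List.mem_singleton.1 hv)]
    exact ⟨.refl, .refl⟩
  | _, _, .cons e he w, hf, hv => by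
    rcases List.mem_cons.1 hv with rfl | hv
    · exact ⟨.refl, rtg_of_allFwd (Walk.cons e he w) hf⟩
    · have := rtg_of_mem_allFwd w hf.2 hv
      have he' : G.IsEdge EdgeDir.fwd _ _ := hf.1 ▸ he
      exact ⟨Relation.ReflTransGen.head he' this.1, this.2⟩

lemma split_at_mem {v : V} : ∀ {a b : V} (w : G.Walk a b), v ∈ w.support →
    ∃ (w₁ : G.Walk a v) (w₂ : G.Walk v b), w = w₁.append w₂
  | _, _, .nil _, hv => by
    rw [show v = _ from (List.mem_singleton.1 hv)]
    exact ⟨.nil _, .nil _, rfl⟩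
  | a, _, .cons e he w, hv => by
    by_cases hav : a = v
    · subst hav
      exact ⟨.nil _, .cons e he w, rfl⟩
    · have hv' : v ∈ w.support := by
        rcases List.mem_cons.1 hv with h | h
        · exact absurd h.symm hav
        · exact h
      obtain ⟨w₁, w₂, rfl⟩ := split_at_mem w hv'
      exact ⟨.cons e he w₁, w₂, rfl⟩

lemma exists_first_W {Wt : Set V} : ∀ {a b : V} (w : G.Walk a b),
    (∃ v ∈ w.support, v ∈ Wt) →
    ∃ (u : V) (w₁ : G.Walk a u) (w₂ : G.Walk u b), w = w₁.append w₂ ∧ u ∈ Wt ∧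
      ∀ v ∈ w₁.support.dropLast, v ∉ Wt
  | a, _, .nil _, hv => by
    obtain ⟨v, hv, hvW⟩ := hv
    rw [show v = _ from (List.mem_singleton.1 hv)] at hvW
    exact ⟨a, .nil _, .nil _, rfl, hvW, by simp [support]⟩
  | a, _, .cons e he w, hv => by
    by_cases haW : a ∈ Wt
    · exact ⟨a, .nil _, .cons e he w, rfl, haW, by simp [support]⟩
    · have hv' : ∃ v ∈ w.support, v ∈ Wt := by
        obtain ⟨v, hv, hvW⟩ := hv
        rcases List.mem_cons.1 hv with rfl | hv
        · exact absurd hvW haW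
        · exact ⟨v, hv, hvW⟩
      obtain ⟨u, w₁, w₂, rfl, huW, hpre⟩ := exists_first_W w hv'
      refine ⟨u, .cons e he w₁, w₂, rfl, huW, ?_⟩
      intro v hv
      rw [show (Walk.cons e he w₁).support = a :: w₁.support from rfl,
        List.dropLast_cons_of_ne_nil (by rw [support_eq_cons w₁]; simp)] at hv
      rcases List.mem_cons.1 hv with rfl | hv
      · exact haW
      · exact hpre v hv

lemma nodup_append_parts {a v b : V} (w₁ : G.Walk a v) (w₂ : G.Walk v b)
    (h : ((w₁.append w₂).support).Nodup) :
    w₁.support.Nodup ∧ w₂.support.Nodup ∧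
      ∀ u, u ∈ w₁.support → u ∈ w₂.support → u = v := by
  rw [support_append] at h
  have h₁ := h.of_append_left
  have h₂t := h.of_append_right
  have hdisj := List.disjoint_of_nodup_append h
  refine ⟨h₁, ?_, ?_⟩
  · rw [support_eq_cons w₂]
    exact List.nodup_cons.2 ⟨fun hc => hdisj (end_mem_support w₁) hc, h₂t⟩
  · intro u hu₁ hu₂
    rw [support_eq_cons w₂] at hu₂
    rcases List.mem_cons.1 hu₂ with rfl | hu₂
    · rfl
    · exact absurd hu₂ (fun hc => hdisj hu₁ hc)

end Walk

lemma exists_fwd_nodup {a b : V} (h : Relation.ReflTransGen G.dir a b) :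
    ∃ w : G.Walk a b, w.AllFwd ∧ w.support.Nodup := by
  induction h using Relation.ReflTransGen.head_induction_on with
  | refl => exact ⟨.nil _, trivial, by simp [Walk.support]⟩
  | head hd _ ih =>
    obtain ⟨w, hf, hnd⟩ := ih
    rename_i a' m' _
    by_cases hmem : a' ∈ w.support
    · obtain ⟨w₁, w₂, rfl⟩ := Walk.split_at_mem w hmem
      rw [Walk.allFwd_append] at hf
      exact ⟨w₂, hf.2, (Walk.nodup_append_parts w₁ w₂ hnd).2.1⟩
    · refine ⟨.cons EdgeDir.fwd hd w, ⟨rfl, hf⟩, ?_⟩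
      rw [show (Walk.cons EdgeDir.fwd hd w).support = a' :: w.support from rfl]
      exact List.nodup_cons.2 ⟨hmem, hnd⟩

lemma mem_causal_of_dir_rtg {x y v : V} (hG : G.IsADMG) (hxv : G.dir x v)
    (hvy : Relation.ReflTransGen G.dir v y) : v ∈ G.causal x y := by
  have hvx : v ≠ x := by
    rintro rfl
    exact hG.2 v (Relation.TransGen.single hxv)
  obtain ⟨w, hf, hnd⟩ := exists_fwd_nodup hvy
  have hxnot : x ∉ w.support := by
    intro hx
    have := (Walk.rtg_of_mem_allFwd w hf hx).1
    exact hG.2 x (Relation.TransGen.head' hxv this)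
  refine ⟨hvx, Walk.cons EdgeDir.fwd hxv w, ⟨rfl, hf⟩, ?_, ?_⟩
  · rw [show (Walk.cons EdgeDir.fwd hxv w).support = x :: w.support from rfl]
    exact List.nodup_cons.2 ⟨hxnot, hnd⟩
  · exact List.mem_cons_of_mem _ (Walk.start_mem_support w)

lemma rtg_end_of_causal {x y c : V} (hc : c ∈ G.causal x y) :
    Relation.ReflTransGen G.dir c y := by
  obtain ⟨_, w, hf, _, hmem⟩ := hc
  exact (Walk.rtg_of_mem_allFwd w hf hmem).2

end MixedGraph

end Aux3
section Aux4

namespace MixedGraph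

variable {V : Type} {G : MixedGraph V}

attribute [local instance] Classical.propDecidable

namespace Walk

/-- All directed edges used by the walk survive in `G̃`. -/
def Good (x : V) (C : Set V) : {a b : V} → G.Walk a b → Prop
  | _, _, .nil _ => True
  | _, _, @Walk.cons _ _ a m _ e _ w =>
      ¬(e = EdgeDir.fwd ∧ a = x ∧ m ∈ C) ∧ ¬(e = EdgeDir.back ∧ m = x ∧ a ∈ C) ∧ Good x C w

/-- The number of backward traversals of removed edges. -/
noncomputable def backCnt (x : V) (C : Set V) : {a b : V} → G.Walk a b → ℕ
  | _, _, .nil _ => 0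
  | _, _, @Walk.cons _ _ a m _ e _ w =>
      (if e = EdgeDir.back ∧ m = x ∧ a ∈ C then 1 else 0) + backCnt x C w

lemma backCnt_append {x : V} {C : Set V} : ∀ {a b c : V} (w₁ : G.Walk a b) (w₂ : G.Walk b c),
    backCnt x C (w₁.append w₂) = backCnt x C w₁ + backCnt x C w₂
  | _, _, _, .nil _, w₂ => by simp [append, backCnt]
  | _, _, _, .cons e h w, w₂ => by
    show (if _ then 1 else 0) + backCnt x C (w.append w₂) = ((if _ then 1 else 0) + _) + _
    rw [backCnt_append w w₂]
    omega

lemma backCnt_allFwd {x : V} {C : Set V} : ∀ {a b : V} (w : G.Walk a b), w.AllFwd →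
    backCnt x C w = 0
  | _, _, .nil _, _ => rfl
  | _, _, .cons e h w, hf => by
    show (if e = EdgeDir.back ∧ _ ∧ _ then 1 else 0) + backCnt x C w = 0
    rw [backCnt_allFwd w hf.2, if_neg (by rw [hf.1]; simp)]

lemma good_append {x : V} {C : Set V} : ∀ {a b c : V} (w₁ : G.Walk a b) (w₂ : G.Walk b c),
    Good x C (w₁.append w₂) ↔ Good x C w₁ ∧ Good x C w₂
  | _, _, _, .nil _, w₂ => by simp [append, Good]
  | _, _, _, .cons e h w, w₂ => by
    show (_ ∧ _ ∧ Good x C (w.append w₂)) ↔ (_ ∧ _ ∧ Good x C w) ∧ _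
    rw [good_append w w₂]
    tauto

lemma not_good_decomp {x : V} {C : Set V} : ∀ {a b : V} (p : G.Walk a b), ¬ Good x C p →
    ∃ (m m' : V) (p₁ : G.Walk a m) (e : EdgeDir) (h : G.IsEdge e m m') (p₂ : G.Walk m' b),
      p = p₁.append (.cons e h p₂) ∧
      ((e = EdgeDir.fwd ∧ x = m ∧ m' ∈ C) ∨ (e = EdgeDir.back ∧ x = m' ∧ m ∈ C))
  | _, _, .nil _, hg => absurd trivial hg
  | _, _, @Walk.cons _ _ a m b e h p, hg => by
    by_cases h₁ : e = EdgeDir.fwd ∧ a = x ∧ m ∈ C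
    · exact ⟨_, _, .nil _, e, h, p, rfl, Or.inl ⟨h₁.1, h₁.2.1.symm, h₁.2.2⟩⟩
    · by_cases h₂ : e = EdgeDir.back ∧ m = x ∧ a ∈ C
      · exact ⟨_, _, .nil _, e, h, p, rfl, Or.inr ⟨h₂.1, h₂.2.1.symm, h₂.2.2⟩⟩
      · have hp : ¬ Good x C p := fun hgp => hg ⟨h₁, h₂, hgp⟩
        obtain ⟨m, m', p₁, e', h', p₂, rfl, hbad⟩ := not_good_decomp p hp
        exact ⟨m, m', .cons e h p₁, e', h', p₂, rfl, hbad⟩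

end Walk

section Tilde

variable {x y : V} {Wt : Set V}

lemma tilde_edge_of_good {e : EdgeDir} {a m : V} (h : G.IsEdge e a m)
    (h₁ : ¬(e = EdgeDir.fwd ∧ a = x ∧ m ∈ G.causal x y))
    (h₂ : ¬(e = EdgeDir.back ∧ m = x ∧ a ∈ G.causal x y)) :
    (G.tilde x y).IsEdge e a m := by
  cases e
  · exact ⟨h, fun hc => h₁ ⟨rfl, hc⟩⟩
  · exact ⟨h, fun hc => h₂ ⟨rfl, hc.1, hc.2⟩⟩
  · exact h

lemma good_of_tilde_edge {e : EdgeDir} {a m : V} (h : (G.tilde x y).IsEdge e a m) :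
    G.IsEdge e a m ∧ ¬(e = EdgeDir.fwd ∧ a = x ∧ m ∈ G.causal x y) ∧
      ¬(e = EdgeDir.back ∧ m = x ∧ a ∈ G.causal x y) := by
  cases e
  · exact ⟨h.1, fun hc => h.2 ⟨hc.2.1, hc.2.2⟩, by simp⟩
  · exact ⟨h.1, by simp, fun hc => h.2 ⟨hc.2.1, hc.2.2⟩⟩
  · exact ⟨h, by simp, by simp⟩

lemma openFrom_toTilde : ∀ {m c : V} (w : G.Walk m c),
    w.Good x (G.causal x y) → ∀ e, Walk.openFrom Wt e m w →
    ∃ w' : (G.tilde x y).Walk m c, Walk.openFrom Wt e m w'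
  | _, _, .nil v, _, _, _ => ⟨.nil v, trivial⟩
  | _, _, .cons e₂ h₂ w₂, hg, e, ho => by
    obtain ⟨hc₁, hc₂, ho₂⟩ := ho
    obtain ⟨w₂', ho₂'⟩ := openFrom_toTilde w₂ hg.2.2 e₂ ho₂
    exact ⟨.cons e₂ (tilde_edge_of_good h₂ hg.1 hg.2.1) w₂', hc₁, hc₂, ho₂'⟩

lemma openFrom_fromTilde : ∀ {m c : V} (w' : (G.tilde x y).Walk m c),
    ∀ e, Walk.openFrom Wt e m w' →
    ∃ w : G.Walk m c, w.Good x (G.causal x y) ∧ Walk.openFrom Wt e m w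
  | _, _, .nil v, _, _ => ⟨.nil v, trivial, trivial⟩
  | _, _, .cons e₂ h₂ w₂, e, ho => by
    obtain ⟨hc₁, hc₂, ho₂⟩ := ho
    obtain ⟨w₂', hg₂, ho₂'⟩ := openFrom_fromTilde w₂ e₂ ho₂
    obtain ⟨he, hg₁, hg₂'⟩ := good_of_tilde_edge h₂
    exact ⟨.cons e₂ he w₂', ⟨hg₁, hg₂', hg₂⟩, ⟨hc₁, hc₂, ho₂'⟩⟩

lemma isOpen_toTilde : ∀ {a b : V} (w : G.Walk a b), w.Good x (G.causal x y) →
    w.IsOpen Wt → ∃ w' : (G.tilde x y).Walk a b, w'.IsOpen Wt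
  | _, _, .nil v, _, _ => ⟨.nil v, trivial⟩
  | _, _, .cons e h w, hg, ho => by
    obtain ⟨w', ho'⟩ := openFrom_toTilde w hg.2.2 e ho
    exact ⟨.cons e (tilde_edge_of_good h hg.1 hg.2.1) w', ho'⟩

lemma isOpen_fromTilde : ∀ {a b : V} (w' : (G.tilde x y).Walk a b), w'.IsOpen Wt →
    ∃ w : G.Walk a b, w.Good x (G.causal x y) ∧ w.IsOpen Wt
  | _, _, .nil v, _ => ⟨.nil v, trivial, trivial⟩
  | _, _, .cons e h w, ho => by
    obtain ⟨w₂, hg₂, ho₂⟩ := openFrom_fromTilde w e ho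
    obtain ⟨he, hg₁, hg₂'⟩ := good_of_tilde_edge h
    exact ⟨.cons e he w₂, ⟨hg₁, hg₂', hg₂⟩, ho₂⟩

lemma tilde_bidir_symm (hG : G.IsADMG) :
    ∀ a b, (G.tilde x y).bidir a b → (G.tilde x y).bidir b a :=
  fun a b h => hG.1 a b h

lemma descSet_dir {S : Set V} {u m : V} (hu : u ∈ G.descSet S) (h : G.dir u m) :
    m ∈ G.descSet S := by
  obtain ⟨s, hs, hrtg⟩ := hu
  exact ⟨s, hs, hrtg.tail h⟩

lemma causal_subset_descSet : G.causal x y ⊆ G.descSet (G.causal x y) :=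
  fun c hc => ⟨c, hc, .refl⟩

/-- After reaching a descendant of a causal node via an arrowhead, an open walk must
continue with forward edges only. -/
lemma allFwd_after (hforb : ∀ v ∈ G.descSet (G.causal x y), v ∉ Wt) :
    ∀ {c b : V} (w : G.Walk c b) (e : EdgeDir), e.arrowSnd →
      c ∈ G.descSet (G.causal x y) → Walk.openFrom Wt e c w → w.AllFwd
  | _, _, .nil _, _, _, _, _ => trivial
  | _, _, .cons e₂ h₂ w₂, e, hsnd, hc, ho => by
    obtain ⟨hc₁, hc₂, ho₂⟩ := ho
    have hnW : _ ∉ Wt := hforb _ hc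
    have hncol : ¬ IsColliderPair e e₂ := fun hcol => hnW (hc₁ hcol)
    have he₂ : e₂ = EdgeDir.fwd := collider_back_of e e₂ hncol hsnd
    subst he₂
    refine ⟨rfl, allFwd_after hforb w₂ EdgeDir.fwd trivial (descSet_dir hc h₂) ho₂⟩

/-- The tail of a causal path from a causal node. -/
lemma causal_tail_path {c : V} (hc : c ∈ G.causal x y) :
    ∃ π₂ : G.Walk c y, π₂.AllFwd ∧ π₂.support.Nodup ∧
      ∀ v ∈ π₂.support, v ∈ G.causal x y := by
  obtain ⟨hcx, π, hf, hnd, hmem⟩ := hc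
  obtain ⟨π₁, π₂, rfl⟩ := Walk.split_at_mem π hmem
  obtain ⟨hnd₁, hnd₂, hboth⟩ := Walk.nodup_append_parts π₁ π₂ hnd
  rw [Walk.allFwd_append] at hf
  have hxnot : x ∉ π₂.support := by
    intro hx
    exact hcx (hboth x (Walk.start_mem_support π₁) hx).symm
  refine ⟨π₂, hf.2, hnd₂, ?_⟩
  intro v hv
  have hvx : v ≠ x := fun hvx => hxnot (hvx ▸ hv)
  refine ⟨hvx, π₁.append π₂, Walk.allFwd_append π₁ π₂ |>.2 hf, hnd, ?_⟩
  rw [Walk.support_append]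
  rw [Walk.support_eq_cons π₂] at hv
  rcases List.mem_cons.1 hv with rfl | hv
  · exact List.mem_append_left _ (Walk.end_mem_support π₁)
  · exact List.mem_append_right _ hv

end Tilde

end MixedGraph

end Aux4
section Aux5

namespace MixedGraph

variable {V : Type} {G : MixedGraph V}

attribute [local instance] Classical.propDecidable

lemma Walk.mem_support_append_right {v : V} {a b c : V} (w₁ : G.Walk a b) (w₂ : G.Walk b c)
    (hv : v ∈ w₂.support) : v ∈ (w₁.append w₂).support := by
  rw [Walk.support_append]
  rw [Walk.support_eq_cons w₂] at hv
  rcases List.mem_cons.1 hv with rfl | hv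
  · exact List.mem_append_left _ (Walk.end_mem_support w₁)
  · exact List.mem_append_right _ hv

lemma Walk.eq_of_allFwd_allBack : ∀ {a b : V} (w : G.Walk a b), w.AllFwd → w.AllBack → a = b
  | _, _, .nil _, _, _ => rfl
  | _, _, .cons e h w, hf, hb => by
    have h1 : e = EdgeDir.fwd := hf.1
    have h2 : e = EdgeDir.back := hb.1
    rw [h1] at h2
    exact absurd h2 (by simp)

/-- Forward direction for `O₃`: given validity facts, no open walk from `Z` to `y` can
avoid ending with a directed segment from `x`. -/
lemma fwd_O3 {x y : V} {Z W : Set V} (hG : G.IsADMG)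
    (hWforb : ∀ v ∈ G.forb x y, v ∉ W)
    (hZforb : ∀ v ∈ G.forb x y, v ∉ Z)
    (hxy : x ≠ y)
    (hnd : ¬ (G.tilde x y).dConn {y} Z W) :
    ∀ (n : ℕ) (z : V), z ∈ Z → ∀ p : G.Walk z y, p.IsOpen W → ¬ p.EndsWithDirFrom x →
      p.backCnt x (G.causal x y) ≤ n → False := by
  intro n
  induction n using Nat.strong_induction_on with
  | _ n IH =>
  intro z hz p hop hne hcnt
  have hforbW : ∀ v ∈ G.descSet (G.causal x y), v ∉ W := fun v hv => hWforb v (Or.inl hv)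
  by_cases hg : p.Good x (G.causal x y)
  · obtain ⟨p', hop'⟩ := isOpen_toTilde p hg hop
    exact hnd ⟨y, rfl, z, hz, p'.reverse (tilde_bidir_symm hG),
      Walk.isOpen_reverse _ p' hop'⟩
  · obtain ⟨m, m', p₁, e, h, p₂, rfl, hbad⟩ := Walk.not_good_decomp p hg
    rcases hbad with ⟨rfl, rfl, hm'⟩ | ⟨rfl, rfl, hm⟩
    · -- forward traversal of a removed edge x → m'
      have hopf : Walk.openFrom W EdgeDir.fwd m' p₂ := Walk.openFrom_of_decomp p₁ _ h p₂ hop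
      have hall : p₂.AllFwd :=
        allFwd_after hforbW p₂ EdgeDir.fwd trivial (causal_subset_descSet hm') hopf
      exact hne (Walk.ends_append_right p₁ (Or.inl ⟨rfl, rfl, hall⟩))
    · -- backward traversal of a removed edge: walk goes m, then back-edge to x
      obtain ⟨π₂, hπf, hπnd, hπmem⟩ := causal_tail_path hm
      have hπW : ∀ v ∈ π₂.support, v ∉ W :=
        fun v hv => hforbW v (causal_subset_descSet (hπmem v hv))
      cases p₁ with
      | nil =>
        exact hZforb _ (Or.inl (causal_subset_descSet hm)) hz
      | cons e₀ h₀ p₁' =>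
        have hop' : Walk.openFrom W e₀ _ (p₁'.append (.cons EdgeDir.back h p₂)) := hop
        rw [Walk.openFrom_append] at hop'
        obtain ⟨ho₁, _⟩ := hop'
        -- the new walk
        have hoq : ((Walk.cons e₀ h₀ p₁').append π₂).IsOpen W := by
          show Walk.openFrom W e₀ _ (p₁'.append π₂)
          rw [Walk.openFrom_append]
          refine ⟨ho₁, Walk.openFrom_of_allFwd π₂ _ hπf ?_⟩
          intro v hv
          exact hπW v (List.dropLast_subset _ hv)
        have hneq : ¬ ((Walk.cons e₀ h₀ p₁').append π₂).EndsWithDirFrom x := by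
          intro hq
          rcases Walk.ends_append _ π₂ hq with ⟨hE₁, _⟩ | hE₂
          · -- the prefix ends with a directed segment from x; find a forward removed edge
            obtain ⟨w₀, s, hsf, hpeq⟩ := Walk.ends_decomp _ hE₁
            cases s with
            | nil => exact hm.1 rfl
            | cons e₁ h₁ s' =>
              have he₁ : e₁ = EdgeDir.fwd := hsf.1
              subst he₁
              have hs'f := hsf.2
              have hvcaus := mem_causal_of_dir_rtg (v := _) hG h₁
                ((Walk.rtg_of_allFwd s' hs'f).trans (rtg_end_of_causal hm))
              have hdecomp : (Walk.cons e₀ h₀ p₁').append (.cons EdgeDir.back h p₂)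
                  = w₀.append (.cons EdgeDir.fwd h₁ (s'.append (.cons EdgeDir.back h p₂))) := by
                rw [hpeq, Walk.append_assoc]
                rfl
              rw [hdecomp] at hop
              have hof := Walk.openFrom_of_decomp w₀ _ h₁ _ hop
              have hall : (s'.append (.cons EdgeDir.back h p₂)).AllFwd :=
                allFwd_after hforbW _ EdgeDir.fwd trivial
                  (causal_subset_descSet hvcaus) hof
              rw [Walk.allFwd_append] at hall
              exact absurd hall.2.1 (by simp)
          · have := Walk.mem_of_ends_allFwd π₂ hπf hE₂
            exact (hπmem x this).1 rfl
        -- the count decreases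
        have hc₁ : Walk.backCnt x (G.causal x y) ((Walk.cons e₀ h₀ p₁').append π₂)
            < Walk.backCnt x (G.causal x y)
              ((Walk.cons e₀ h₀ p₁').append (.cons EdgeDir.back h p₂)) := by
          rw [Walk.backCnt_append, Walk.backCnt_append, Walk.backCnt_allFwd π₂ hπf]
          have : Walk.backCnt x (G.causal x y) (Walk.cons EdgeDir.back h p₂)
              = 1 + Walk.backCnt x (G.causal x y) p₂ := by
            show (if _ ∧ _ ∧ _ then 1 else 0) + _ = _
            rw [if_pos ⟨rfl, rfl, hm⟩]
          omega
        exact IH _ (by omega) z hz _ hoq hneq le_rfl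

end MixedGraph

end Aux5
section Aux6

namespace MixedGraph

variable {V : Type} {G : MixedGraph V}

lemma bwd_tilde {x y : V} {Z W : Set V} (hG : G.IsADMG) (hxy : x ≠ y)
    (hyO₃ : ¬ ∃ z ∈ Z, ∃ w : G.Walk z y, w.IsOpen W ∧ ¬ w.EndsWithDirFrom x) :
    ¬ (G.tilde x y).dConn {y} Z W := by
  rintro ⟨y', hy', z, hz, wt, hwt⟩
  rw [Set.mem_singleton_iff] at hy'
  subst hy'
  have hr := Walk.isOpen_reverse (tilde_bidir_symm hG) wt hwt
  obtain ⟨p, hgp, hopp⟩ := isOpen_fromTilde _ hr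
  by_cases hE : p.EndsWithDirFrom x
  · obtain ⟨w₀, s, hsf, rfl⟩ := Walk.ends_decomp p hE
    have hgs := ((Walk.good_append w₀ s).1 hgp).2
    cases s with
    | nil => exact hxy rfl
    | cons e₁ h₁ s' =>
      have he₁ : e₁ = EdgeDir.fwd := hsf.1
      subst he₁
      have hvc := mem_causal_of_dir_rtg (v := _) hG h₁ (Walk.rtg_of_allFwd s' hsf.2)
      exact hgs.1 ⟨rfl, rfl, hvc⟩
  · exact hyO₃ ⟨z, hz, p, hopp, hE⟩

lemma surgeryW {x y : V} {Z W : Set V} (hG : G.IsADMG)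
    (hconn : ∃ z ∈ Z, ∃ p₀ : G.Walk z x, p₀.IsOpen W)
    (hxZ : x ∉ Z)
    (hO₁ : ∀ (wk : G.Walk x y), wk.AllFwd → wk.support.Nodup → ∀ v ∈ wk.support, v ∉ W)
    (hyO₃ : ¬ ∃ z ∈ Z, ∃ w : G.Walk z y, w.IsOpen W ∧ ¬ w.EndsWithDirFrom x) :
    ∀ u ∈ G.descSet (G.causal x y), u ∉ W := by
  rintro u ⟨c, hc, hrtg⟩ huW
  obtain ⟨hcx, π, hπf, hπnd, hπc⟩ := hc
  have hπW := hO₁ π hπf hπnd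
  obtain ⟨π₁, π₂, rfl⟩ := Walk.split_at_mem π hπc
  obtain ⟨hnd₁, hnd₂, hboth⟩ := Walk.nodup_append_parts π₁ π₂ hπnd
  have hππ := (Walk.allFwd_append π₁ π₂).1 hπf
  have hπ₁W : ∀ v ∈ π₁.support, v ∉ W := fun v hv =>
    hπW v (by rw [Walk.support_append]; exact List.mem_append_left _ hv)
  have hπ₂W : ∀ v ∈ π₂.support, v ∉ W := fun v hv =>
    hπW v (Walk.mem_support_append_right π₁ π₂ hv)
  have hπ₂x : x ∉ π₂.support := fun hx => hcx (hboth x (Walk.start_mem_support π₁) hx).symm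
  obtain ⟨ρ, hρf, hρnd⟩ := exists_fwd_nodup hrtg
  obtain ⟨u', ρ₁, ρ₂, rfl, hu'W, hpre⟩ :=
    Walk.exists_first_W ρ ⟨u, Walk.end_mem_support _, huW⟩
  have hρ₁full := ((Walk.allFwd_append ρ₁ ρ₂).1 hρf).1
  have hcW : c ∉ W := hπ₂W c (Walk.start_mem_support π₂)
  have hcu' : c ≠ u' := fun hcu => hcW (hcu ▸ hu'W)
  obtain ⟨z, hz, p₀, hp₀⟩ := hconn
  cases ρ₁ with
  | nil => exact hcu' rfl
  | cons eρ hρ ρ₁' =>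
    have heρ : eρ = EdgeDir.fwd := hρ₁full.1
    subst heρ
    cases p₀ with
    | nil => exact hxZ hz
    | cons e₀ h₀ p₀' =>
      have hrevAB : ((Walk.cons EdgeDir.fwd hρ ρ₁').reverse hG.1).AllBack :=
        Walk.allBack_reverse hG.1 _ hρ₁full
      have hl : Walk.lastE (Walk.lastE (Walk.lastE e₀ p₀') π₁) (Walk.cons EdgeDir.fwd hρ ρ₁')
          = EdgeDir.fwd := Walk.lastE_fwd_of_allFwd ρ₁' hρ₁full.2
      have hoq : ((Walk.cons e₀ h₀ p₀').append (π₁.append ((Walk.cons EdgeDir.fwd hρ ρ₁').append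
          (((Walk.cons EdgeDir.fwd hρ ρ₁').reverse hG.1).append π₂)))).IsOpen W := by
        show Walk.openFrom W e₀ _ _
        rw [Walk.openFrom_append, Walk.openFrom_append, Walk.openFrom_append,
          Walk.openFrom_append]
        refine ⟨hp₀, ?_, ?_, ?_, ?_⟩
        · apply Walk.openFrom_of_allFwd _ _ hππ.1
          intro v hv
          exact hπ₁W v (List.dropLast_subset _ hv)
        · apply Walk.openFrom_of_allFwd _ _ hρ₁full
          intro v hv
          exact hpre v hv
        · apply Walk.openFrom_of_allBack _ _ hrevAB
          · intro _
            exact hu'W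
          · intro hns
            rw [hl] at hns
            exact absurd trivial hns
          · intro v hv
            rw [Walk.support_reverse, List.tail_reverse] at hv
            have h2 := List.dropLast_subset _ hv
            rw [List.mem_reverse] at h2
            exact hpre v h2
        · apply Walk.openFrom_of_allFwd _ _ hππ.2
          intro v hv
          exact hπ₂W v (List.dropLast_subset _ hv)
      have hneq : ¬ ((Walk.cons e₀ h₀ p₀').append (π₁.append ((Walk.cons EdgeDir.fwd hρ ρ₁').append
          (((Walk.cons EdgeDir.fwd hρ ρ₁').reverse hG.1).append π₂)))).EndsWithDirFrom x := by
        intro hq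
        rcases Walk.ends_append _ _ hq with ⟨_, hAF⟩ | hq
        · rw [Walk.allFwd_append, Walk.allFwd_append, Walk.allFwd_append] at hAF
          exact hcu' (Walk.eq_of_allFwd_allBack _ hAF.2.2.1 hrevAB).symm
        rcases Walk.ends_append _ _ hq with ⟨_, hAF⟩ | hq
        · rw [Walk.allFwd_append, Walk.allFwd_append] at hAF
          exact hcu' (Walk.eq_of_allFwd_allBack _ hAF.2.1 hrevAB).symm
        rcases Walk.ends_append _ _ hq with ⟨_, hAF⟩ | hq
        · rw [Walk.allFwd_append] at hAF
          exact hcu' (Walk.eq_of_allFwd_allBack _ hAF.1 hrevAB).symm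
        rcases Walk.ends_append _ _ hq with ⟨hEr, _⟩ | hq
        · exact hcx (Walk.end_eq_of_ends_allBack _ hrevAB hEr)
        · exact hπ₂x (Walk.mem_of_ends_allFwd π₂ hππ.2 hq)
      exact hyO₃ ⟨z, hz, _, hoq, hneq⟩

lemma surgeryZ {x y : V} {Z W : Set V} (hG : G.IsADMG)
    (hZW : Disjoint Z W)
    (hWdesc : ∀ v ∈ G.descSet (G.causal x y), v ∉ W)
    (hyO₃ : ¬ ∃ z ∈ Z, ∃ w : G.Walk z y, w.IsOpen W ∧ ¬ w.EndsWithDirFrom x) :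
    ∀ u ∈ G.descSet (G.causal x y), u ∉ Z := by
  rintro u ⟨c, hc, hrtg⟩ huZ
  obtain ⟨π₂, hπf, hπnd, hπmem⟩ := causal_tail_path hc
  have hπ₂W : ∀ v ∈ π₂.support, v ∉ W := fun v hv =>
    hWdesc v (causal_subset_descSet (hπmem v hv))
  have hπ₂x : x ∉ π₂.support := fun hx => (hπmem x hx).1 rfl
  obtain ⟨ρ, hρf, hρnd⟩ := exists_fwd_nodup hrtg
  have hρW : ∀ v ∈ ρ.support, v ∉ W := fun v hv =>
    hWdesc v ⟨c, hc, (Walk.rtg_of_mem_allFwd ρ hρf hv).1⟩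
  have huW : u ∉ W := fun h => Set.disjoint_left.1 hZW huZ h
  have hrevAB := Walk.allBack_reverse hG.1 ρ hρf
  have hoq : ((ρ.reverse hG.1).append π₂).IsOpen W := by
    refine Walk.isOpen_of_openFrom (e := EdgeDir.back) _ ?_
    rw [Walk.openFrom_append]
    constructor
    · apply Walk.openFrom_of_allBack _ _ hrevAB
      · intro hsnd
        exact hsnd.elim
      · intro _
        exact huW
      · intro v hv
        rw [Walk.support_reverse, List.tail_reverse] at hv
        have h2 := List.dropLast_subset _ hv
        rw [List.mem_reverse] at h2
        exact hρW v (List.dropLast_subset _ h2)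
    · apply Walk.openFrom_of_allFwd _ _ hπf
      intro v hv
      exact hπ₂W v (List.dropLast_subset _ hv)
  have hneq : ¬ ((ρ.reverse hG.1).append π₂).EndsWithDirFrom x := by
    intro hq
    rcases Walk.ends_append _ _ hq with ⟨hEr, _⟩ | hq
    · exact hc.1 (Walk.end_eq_of_ends_allBack _ hrevAB hEr)
    · exact hπ₂x (Walk.mem_of_ends_allFwd π₂ hπf hq)
  exact hyO₃ ⟨u, huZ, _, hoq, hneq⟩

end MixedGraph

end Aux6
/-- Let `Z`, `{x}`, `W` be pairwise disjoint node sets in an ADMG `G`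
with node set `V`. Let `O₁` be the set of nodes `v` such that some directed path from `x`
to `v` contains a node of `W`, and `O₃` the set of nodes `v` such that some walk from `Z`
to `v` is open given `W` and does not end with a segment of the form `x → ⋯ → v`.
If no walk from `Z` to `x` is open given `W`, then there is no node `y` such that `(Z,W)`
is a valid conditional instrumental set relative to `(x,y)` in `G`; otherwise, the set of
nodes `y` such that `(Z,W)` is a valid conditional instrumental set relative to `(x,y)`
in `G` equals `V ∖ (O₁ ∪ O₃ ∪ Z ∪ W ∪ {x})`. -/
theorem valid_cis_targets_eq {V : Type} (G : MixedGraph V) (hG : G.IsADMG)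
    (x : V) (Z W : Set V)
    (hxZ : x ∉ Z) (hxW : x ∉ W) (hZW : Disjoint Z W) :
    (¬ (∃ z ∈ Z, ∃ w : G.Walk z x, w.IsOpen W) →
      ∀ y : V, ¬ G.ValidCIS x y Z W) ∧
    ((∃ z ∈ Z, ∃ w : G.Walk z x, w.IsOpen W) →
      {y | G.ValidCIS x y Z W} =
        ({v | ∃ w : G.Walk x v, w.AllFwd ∧ w.support.Nodup ∧ ∃ u ∈ w.support, u ∈ W} ∪
         {v | ∃ z ∈ Z, ∃ w : G.Walk z v, w.IsOpen W ∧ ¬ w.EndsWithDirFrom x} ∪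
         Z ∪ W ∪ {x})ᶜ) := by
  constructor
  · -- Part 1: no open walk from Z to x implies no valid y.
    intro h y hval
    obtain ⟨_, _, _, _, _, _, _, hdconn, _⟩ := hval
    obtain ⟨x', hx', z, hz, w, hw⟩ := hdconn
    rw [Set.mem_singleton_iff] at hx'
    subst hx'
    exact h ⟨z, hz, w.reverse hG.1, MixedGraph.Walk.isOpen_reverse _ w hw⟩
  · -- Part 2: the set equality.
    intro hconn
    ext y
    simp only [Set.mem_setOf_eq, Set.mem_compl_iff, Set.mem_union, Set.mem_singleton_iff]
    constructor
    · rintro ⟨hxy, hxZ', hxW', hyZ, hyW, hZW', hforbeq, hdconn, hnd⟩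
      have hempty := Set.eq_empty_iff_forall_notMem.1 hforbeq
      rintro ((((hO₁ | hO₃) | hZ) | hW) | hx)
      · obtain ⟨wk, hf, hnd', u, hu, huW⟩ := hO₁
        by_cases hux : u = x
        · exact hxW' (hux ▸ huW)
        · exact hempty u ⟨Or.inr huW,
            Or.inl (MixedGraph.causal_subset_descSet ⟨hux, wk, hf, hnd', hu⟩)⟩
      · obtain ⟨z, hz, p, hop, hne⟩ := hO₃
        exact MixedGraph.fwd_O3 hG (fun v hv hvW => hempty v ⟨Or.inr hvW, hv⟩)
          (fun v hv hvZ => hempty v ⟨Or.inl hvZ, hv⟩) hxy hnd _ z hz p hop hne le_rfl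
      · exact hyZ hZ
      · exact hyW hW
      · exact hxy hx.symm
    · intro hy
      have hyO₁ : ¬ ∃ w : G.Walk x y, w.AllFwd ∧ w.support.Nodup ∧ ∃ u ∈ w.support, u ∈ W :=
        fun h => hy (Or.inl (Or.inl (Or.inl (Or.inl h))))
      have hyO₃ : ¬ ∃ z ∈ Z, ∃ w : G.Walk z y, w.IsOpen W ∧ ¬ w.EndsWithDirFrom x :=
        fun h => hy (Or.inl (Or.inl (Or.inl (Or.inr h))))
      have hyZ : y ∉ Z := fun h => hy (Or.inl (Or.inl (Or.inr h)))
      have hyW : y ∉ W := fun h => hy (Or.inl (Or.inr h))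
      have hyx : y ≠ x := fun h => hy (Or.inr h)
      have hO₁' : ∀ (wk : G.Walk x y), wk.AllFwd → wk.support.Nodup →
          ∀ v ∈ wk.support, v ∉ W :=
        fun wk hf hnd v hv hvW => hyO₁ ⟨wk, hf, hnd, v, hv, hvW⟩
      have hWdesc := MixedGraph.surgeryW hG hconn hxZ hO₁' hyO₃
      have hZdesc := MixedGraph.surgeryZ hG hZW hWdesc hyO₃
      obtain ⟨z, hz, p₀, hp₀⟩ := hconn
      refine ⟨hyx.symm, hxZ, hxW, hyZ, hyW, hZW, ?_, ?_, ?_⟩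
      · rw [Set.eq_empty_iff_forall_notMem]
        rintro u ⟨huZW, huforb⟩
        rcases huforb with hdesc | hux
        · rcases huZW with huZ | huW
          · exact hZdesc u hdesc huZ
          · exact hWdesc u hdesc huW
        · have hux' : u = x := hux
          rcases huZW with huZ | huW
          · exact hxZ (hux' ▸ huZ)
          · exact hxW (hux' ▸ huW)
      · exact ⟨x, rfl, z, hz, p₀.reverse hG.1, MixedGraph.Walk.isOpen_reverse _ p₀ hp₀⟩
      · exact MixedGraph.bwd_tilde hG hyx.symm hyO₃
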